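/- arXiv:math/0601161 — 2 statements merged into one kernel-verified Lean document; each statement's English description precedes it below -/
import Mathlib

section
/- (Lemma 2.1) Define the sequence α₁ = 0 and α_{j+1} = α_j + 2j for j = 1, 2, 3, … (equivalently α_j = j(j-1)). Let j ≥ 1 and let α ≥ α_j be real. Define f : ℝ → ℝ by f(t) = exp(-α/(1-t)) for t < 1 and f(t) = 0 for t ≥ 1. Then for every t > 0, (-1)^j times the j-th derivative of f at t is nonnegative, i.e. (-1)^j f^{(j)}(t) ≥ 0. -/
/-- The sequence `α₁ = 0`, `α_{j+1} = α_j + 2j` (so `α_j = j(j-1)`). -/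
def alphaSeq : ℕ → ℕ
  | 0 => 0
  | j + 1 => alphaSeq j + 2 * j

namespace BumpCM

noncomputable def B : ℕ → ℕ → ℝ
  | 0, 0 => 1
  | 0, _ + 1 => 0
  | _ + 1, 0 => 0
  | j + 1, k + 1 => B j k + (j + k + 1) * B j (k + 1)

lemma B_succ_zero (j : ℕ) : B (j+1) 0 = 0 := by simp [B]

lemma B_succ_succ (j k : ℕ) : B (j+1) (k+1) = B j k + ((j:ℝ) + k + 1) * B j (k+1) := by
  simp only [B]; try push_cast; try ring

lemma B_eq_zero (j k : ℕ) (h : j < k) : B j k = 0 := by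
  induction j generalizing k with
  | zero => cases k with
    | zero => omega
    | succ k => simp [B]
  | succ j ih =>
    cases k with
    | zero => omega
    | succ k =>
      simp only [B]
      rw [ih k (by omega), ih (k+1) (by omega)]
      ring

lemma j_mul_B_zero (j : ℕ) : ((j:ℝ)) * B j 0 = 0 := by
  cases j with
  | zero => simp
  | succ m => simp [B_succ_zero]

noncomputable def F (α : ℝ) (j : ℕ) (t : ℝ) : ℝ :=
  (∑ k ∈ Finset.range (j+1), (-1:ℝ)^k * B j k * α^k * ((1-t)⁻¹)^(j+k)) *
    Real.exp (-α * (1-t)⁻¹)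

lemma sum_step (α w : ℝ) (j : ℕ) :
    (∑ k ∈ Finset.range (j+2), (-1:ℝ)^k * B (j+1) k * α^k * w^(j+1+k))
      = (∑ k ∈ Finset.range (j+1),
          (-1:ℝ)^k * B j k * α^k * ((((j:ℝ))+k) * w^(j+k-1) * w^2))
        + (∑ k ∈ Finset.range (j+1), (-1:ℝ)^k * B j k * α^k * w^(j+k)) * (-α * w^2) := by
  have hpow : ∀ k : ℕ, (((j:ℝ))+k) * w^(j+k-1) * w^2 = (((j:ℝ))+k) * w^(j+k+1) := by
    intro k
    rcases Nat.eq_zero_or_pos (j+k) with h | h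
    · have hj : j = 0 := by omega
      have hk : k = 0 := by omega
      subst hj; subst hk; norm_num
    · have he : j+k-1+2 = j+k+1 := by omega
      rw [mul_assoc, ← pow_add, he]
  -- LHS
  rw [Finset.sum_range_succ' (fun k => (-1:ℝ)^k * B (j+1) k * α^k * w^(j+1+k)) (j+1)]
  simp only [pow_zero, B_succ_zero, mul_zero, zero_mul, mul_one, add_zero, one_mul]
  have hL : ∀ k ∈ Finset.range (j+1),
      (-1:ℝ)^(k+1) * B (j+1) (k+1) * α^(k+1) * w^(j+1+(k+1))
        = ((-1:ℝ)^(k+1) * B j k * α^(k+1) * w^(j+k+2))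
          + ((-1:ℝ)^(k+1) * (((j:ℝ))+k+1) * B j (k+1) * α^(k+1) * w^(j+k+2)) := by
    intro k _
    rw [B_succ_succ]
    ring
  rw [Finset.sum_congr rfl hL, Finset.sum_add_distrib]
  -- RHS first sum
  have hR1 : ∀ k ∈ Finset.range (j+1),
      (-1:ℝ)^k * B j k * α^k * ((((j:ℝ))+k) * w^(j+k-1) * w^2)
        = (-1:ℝ)^k * ((((j:ℝ))+k) * B j k) * α^k * w^(j+k+1) := by
    intro k _
    rw [hpow k]; ring
  rw [Finset.sum_congr rfl hR1]
  rw [Finset.sum_range_succ' (fun k => (-1:ℝ)^k * ((((j:ℝ))+k) * B j k) * α^k * w^(j+k+1)) j]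
  -- RHS second sum
  rw [Finset.sum_mul]
  have hR2 : ∀ k ∈ Finset.range (j+1),
      ((-1:ℝ)^k * B j k * α^k * w^(j+k)) * (-α * w^2)
        = (-1:ℝ)^(k+1) * B j k * α^(k+1) * w^(j+k+2) := by
    intro k _; ring
  rw [Finset.sum_congr rfl hR2]
  -- remaining: second LHS sum equals shifted RHS first sum
  have hM : ∑ k ∈ Finset.range (j+1),
      (-1:ℝ)^(k+1) * (((j:ℝ))+k+1) * B j (k+1) * α^(k+1) * w^(j+k+2)
      = ∑ k ∈ Finset.range j,
        (-1:ℝ)^(k+1) * ((((j:ℝ))+(k+1)) * B j (k+1)) * α^(k+1) * w^(j+(k+1)+1) := by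
    rw [Finset.sum_range_succ (fun k => (-1:ℝ)^(k+1) * (((j:ℝ))+k+1) * B j (k+1) * α^(k+1) * w^(j+k+2)) j]
    rw [B_eq_zero j (j+1) (by omega)]
    simp only [mul_zero, zero_mul, add_zero]
    refine Finset.sum_congr rfl fun k _ => by push_cast; ring
  rw [hM]
  simp only [pow_zero, Nat.cast_zero, add_zero, mul_one, one_mul, j_mul_B_zero, zero_mul, mul_zero]
  push_cast
  ring



lemma F_hasDerivAt (α : ℝ) (j : ℕ) {t : ℝ} (ht : t < 1) :
    HasDerivAt (F α j) (F α (j+1) t) t := by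
  have h1 : (1:ℝ) - t ≠ 0 := by intro h; nlinarith
  set w := (1-t)⁻¹ with hwdef
  have hw : HasDerivAt (fun s : ℝ => (1-s)⁻¹) (w^2) t := by
    have h := ((hasDerivAt_id' t).const_sub 1).fun_inv h1
    refine h.congr_deriv ?_
    rw [hwdef]
    field_simp
  have hexp : HasDerivAt (fun s : ℝ => Real.exp (-α * (1-s)⁻¹))
      (Real.exp (-α * w) * (-α * w^2)) t := (hw.const_mul (-α)).exp
  have hsum : HasDerivAt
      (fun s : ℝ => ∑ k ∈ Finset.range (j+1), (-1:ℝ)^k * B j k * α^k * ((1-s)⁻¹)^(j+k))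
      (∑ k ∈ Finset.range (j+1),
        (-1:ℝ)^k * B j k * α^k * ((((j:ℝ))+k) * w^(j+k-1) * w^2)) t := by
    refine HasDerivAt.fun_sum fun k _ => ?_
    have h := (hw.fun_pow (j+k)).const_mul ((-1:ℝ)^k * B j k * α^k)
    refine h.congr_deriv ?_
    push_cast
    ring
  have hmul := hsum.mul hexp
  have : (∑ k ∈ Finset.range (j+1),
        (-1:ℝ)^k * B j k * α^k * ((((j:ℝ))+k) * w^(j+k-1) * w^2)) * Real.exp (-α * w)
      + (∑ k ∈ Finset.range (j+1), (-1:ℝ)^k * B j k * α^k * w^(j+k))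
        * (Real.exp (-α * w) * (-α * w^2)) = F α (j+1) t := by
    rw [F, show j+1+1 = j+2 from rfl, sum_step α w j]
    ring
  rw [← this]
  exact hmul

lemma iter_eq (α : ℝ) (j : ℕ) :
    ∀ t : ℝ, t < 1 →
      iteratedDeriv j (fun s : ℝ => if s < 1 then Real.exp (-α / (1 - s)) else 0) t
        = F α j t := by
  induction j with
  | zero =>
    intro t ht
    rw [iteratedDeriv_zero]
    simp only [if_pos ht, F, Finset.range_one, Finset.sum_singleton]
    norm_num [B]
    rw [div_eq_mul_inv, neg_mul]
  | succ j ih =>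
    intro t ht
    rw [iteratedDeriv_succ]
    have hev : iteratedDeriv j (fun s : ℝ => if s < 1 then Real.exp (-α / (1 - s)) else 0)
        =ᶠ[nhds t] F α j := by
      filter_upwards [Iio_mem_nhds ht] with s hs using ih s hs
    rw [hev.deriv_eq, (F_hasDerivAt α j ht).deriv]

lemma iter_zero (α : ℝ) (j : ℕ) :
    ∀ t : ℝ, 1 < t →
      iteratedDeriv j (fun s : ℝ => if s < 1 then Real.exp (-α / (1 - s)) else 0) t = 0 := by
  induction j with
  | zero =>
    intro t ht
    rw [iteratedDeriv_zero]
    simp [not_lt.mpr (le_of_lt ht)]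
  | succ j ih =>
    intro t ht
    rw [iteratedDeriv_succ]
    have hev : iteratedDeriv j (fun s : ℝ => if s < 1 then Real.exp (-α / (1 - s)) else 0)
        =ᶠ[nhds t] (fun _ => (0:ℝ)) := by
      filter_upwards [Ioi_mem_nhds ht] with s hs using ih s hs
    rw [hev.deriv_eq, deriv_const]

lemma f_contDiff (α : ℝ) (hα : 0 < α) :
    ContDiff ℝ (((⊤:ℕ∞)) : WithTop ℕ∞)
      (fun s : ℝ => if s < 1 then Real.exp (-α / (1 - s)) else 0) := by
  have heq : (fun s : ℝ => if s < 1 then Real.exp (-α / (1 - s)) else 0)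
      = fun s => expNegInvGlue ((1 - s) / α) := by
    funext s
    by_cases h : s < 1
    · have h0 : 0 < (1 - s) / α := div_pos (by linarith) hα
      rw [if_pos h, expNegInvGlue, if_neg (not_le.mpr h0)]
      congr 1
      field_simp
    · have h0 : (1 - s) / α ≤ 0 := by
        apply div_nonpos_of_nonpos_of_nonneg <;> [linarith [not_lt.mp h]; linarith]
      rw [if_neg h, expNegInvGlue, if_pos h0]
  rw [heq]
  exact expNegInvGlue.contDiff.comp ((contDiff_const.sub contDiff_id).div_const α)

lemma B_nonneg (j k : ℕ) : 0 ≤ B j k := by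
  induction j generalizing k with
  | zero => cases k <;> simp [B]
  | succ j ih =>
    cases k with
    | zero => simp [B]
    | succ k =>
      have h1 := ih k
      have h2 := ih (k + 1)
      have h3 : (0:ℝ) ≤ (j + k + 1 : ℝ) := by positivity
      simp only [B]
      nlinarith

lemma B_ratio (j k : ℕ) : ((k:ℝ) + 1) * k * B j (k + 1) = ((j - k : ℕ) : ℝ) * B j k := by
  induction j generalizing k with
  | zero =>
    cases k with
    | zero => simp [B]
    | succ k => simp [B]
  | succ j ih =>
    cases k with
    | zero => simp [B]
    | succ m =>
      by_cases hm : m < j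
      · have e1 : B (j+1) (m+2) = B j (m+1) + ((j:ℝ) + (m+1) + 1) * B j (m+2) := by
          show B (j+1) ((m+1)+1) = _
          simp only [B]; try push_cast; try ring
        have e2 : B (j+1) (m+1) = B j m + ((j:ℝ) + m + 1) * B j (m+1) := by
          simp only [B]; try push_cast; try ring
        have i1 := ih (m+1)
        have i2 := ih m
        have c1 : ((j - (m+1) : ℕ) : ℝ) = (j:ℝ) - m - 1 := by
          have : (m+1) ≤ j := hm
          push_cast [Nat.cast_sub this]; ring
        have c2 : ((j - m : ℕ) : ℝ) = (j:ℝ) - m := by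
          have : m ≤ j := by omega
          push_cast [Nat.cast_sub this]; ring
        have c3 : ((j + 1 - (m+1) : ℕ) : ℝ) = (j:ℝ) - m := by
          rw [show j + 1 - (m+1) = j - m from by omega]; exact c2
        rw [c1] at i1; rw [c2] at i2
        push_cast at i1 i2
        rw [show ((m:ℕ)+1)+1 = m+2 from rfl, e1, c3, e2]
        push_cast
        linear_combination ((j:ℝ) + m + 2) * i1 + i2
      · have z1 : B j (m+1) = 0 := B_eq_zero j (m+1) (by omega)
        have z2 : B j (m+2) = 0 := B_eq_zero j (m+2) (by omega)
        have e1 : B (j+1) (m+2) = B j (m+1) + ((j:ℝ) + (m+1) + 1) * B j (m+2) := by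
          show B (j+1) ((m+1)+1) = _
          simp only [B]; try push_cast; try ring
        have c3 : ((j + 1 - (m+1) : ℕ) : ℝ) = 0 := by
          rw [show j + 1 - (m+1) = 0 from by omega]; simp
        rw [show ((m:ℕ)+1)+1 = m+2 from rfl, e1, z1, z2, c3]
        ring

lemma alt_sum (d : ℕ → ℝ) (h0 : ∀ i, 0 ≤ d i) (h1 : ∀ i, d (i+1) ≤ d i) :
    ∀ m, 0 ≤ (∑ i ∈ Finset.range m, (-1:ℝ)^i * d i)
      ∧ (∑ i ∈ Finset.range m, (-1:ℝ)^i * d i) ≤ d 0 := by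
  intro m
  induction m generalizing d with
  | zero => simpa using h0 0
  | succ m ih =>
    obtain ⟨ih1, ih2⟩ := ih (fun i => d (i+1)) (fun i => h0 _) (fun i => h1 _)
    rw [Finset.sum_range_succ' (fun i => (-1:ℝ)^i * d i) m]
    have e : ∑ i ∈ Finset.range m, (-1:ℝ)^(i+1) * d (i+1)
        = -∑ i ∈ Finset.range m, (-1:ℝ)^i * d (i+1) := by
      rw [← Finset.sum_neg_distrib]
      exact Finset.sum_congr rfl fun i _ => by ring
    rw [e]
    simp only [pow_zero, one_mul]
    constructor
    · have := h1 0
      linarith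
    · linarith

lemma alphaSeq_eq (j : ℕ) : alphaSeq j = j * (j - 1) := by
  induction j with
  | zero => rfl
  | succ j ih =>
    rw [show alphaSeq (j+1) = alphaSeq j + 2*j from rfl, ih]
    cases j with
    | zero => rfl
    | succ m =>
      simp only [Nat.add_sub_cancel]
      ring

end BumpCM

/-- (Lemma 2.1) If `j ≥ 1` and `α ≥ α_j = j(j-1)`, then for
`f(t) = exp(-α/(1-t))` for `t < 1`, `f(t) = 0` for `t ≥ 1`,
we have `(-1)^j f⁽ʲ⁾(t) ≥ 0` for every `t > 0`. -/
theorem bump_completely_monotone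
    (j : ℕ) (hj : 1 ≤ j) (α : ℝ) (hα : 0 < α) (hαj : (alphaSeq j : ℝ) ≤ α) :
    ∀ t : ℝ, 0 < t →
      0 ≤ (-1 : ℝ) ^ j *
        iteratedDeriv j (fun s : ℝ => if s < 1 then Real.exp (-α / (1 - s)) else 0) t := by
  intro t ht
  rcases lt_trichotomy t 1 with h | h | h
  · -- 0 < t < 1
    rw [BumpCM.iter_eq α j t h]
    have h0 : (0:ℝ) < 1 - t := by linarith
    rw [BumpCM.F, ← mul_assoc]
    set w : ℝ := (1 - t)⁻¹ with hwdef
    have hw0 : (0:ℝ) < w := inv_pos.mpr h0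
    have hw1 : (1:ℝ) ≤ w := (one_le_inv₀ h0).mpr (by linarith)
    refine mul_nonneg ?_ (Real.exp_pos _).le
    set c : ℕ → ℝ := fun k => BumpCM.B j k * α^k * w^(j+k) with hc
    have hαw : ((alphaSeq j : ℕ) : ℝ) ≤ α * w :=
      le_trans hαj (le_mul_of_one_le_right hα.le hw1)
    have hc0 : ∀ k, 0 ≤ c k := fun k =>
      mul_nonneg (mul_nonneg (BumpCM.B_nonneg j k) (pow_nonneg hα.le k)) (pow_nonneg hw0.le _)
    have hmono : ∀ k, k < j → c k ≤ c (k+1) := by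
      intro k hk
      have hr := BumpCM.B_ratio j k
      have hge1 : (1:ℝ) ≤ ((j - k : ℕ) : ℝ) := by
        exact_mod_cast Nat.one_le_iff_ne_zero.mpr (by omega)
      have h1 : BumpCM.B j k ≤ ((k:ℝ)+1) * k * BumpCM.B j (k+1) := by
        rw [hr]
        nlinarith [BumpCM.B_nonneg j k]
      have h2 : ((k:ℝ)+1) * k ≤ α * w := by
        have hnat : (k+1) * k ≤ alphaSeq j := by
          rw [BumpCM.alphaSeq_eq]
          exact Nat.mul_le_mul (by omega) (by omega)
        calc ((k:ℝ)+1)*k = (((k+1)*k : ℕ) : ℝ) := by push_cast; ring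
          _ ≤ ((alphaSeq j : ℕ) : ℝ) := by exact_mod_cast hnat
          _ ≤ α * w := hαw
      have h3 : BumpCM.B j k ≤ α * w * BumpCM.B j (k+1) :=
        le_trans h1 (mul_le_mul_of_nonneg_right h2 (BumpCM.B_nonneg _ _))
      calc c k = BumpCM.B j k * (α^k * w^(j+k)) := by simp only [hc]; ring
        _ ≤ (α * w * BumpCM.B j (k+1)) * (α^k * w^(j+k)) :=
            mul_le_mul_of_nonneg_right h3 (by positivity)
        _ = c (k+1) := by simp only [hc]; ring
    set d : ℕ → ℝ := fun i => c (j - i) with hd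
    have hd0 : ∀ i, 0 ≤ d i := fun i => hc0 _
    have hdmono : ∀ i, d (i+1) ≤ d i := by
      intro i
      show c (j - (i+1)) ≤ c (j - i)
      by_cases hij : i < j
      · rw [show j - i = (j - (i+1)) + 1 from by omega]
        exact hmono (j - (i+1)) (by omega)
      · rw [show j - (i+1) = j - i from by omega]
    obtain ⟨hpos, _⟩ := BumpCM.alt_sum d hd0 hdmono (j+1)
    have hrefl := Finset.sum_range_reflect (fun i => (-1:ℝ)^i * d i) (j+1)
    simp only [Nat.add_sub_cancel] at hrefl
    rw [Finset.mul_sum]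
    have hterm : ∀ k ∈ Finset.range (j+1),
        (-1:ℝ)^j * ((-1:ℝ)^k * BumpCM.B j k * α^k * w^(j+k))
          = (-1:ℝ)^(j-k) * d (j-k) := by
      intro k hk
      have hkj : k ≤ j := by have := Finset.mem_range.mp hk; omega
      have hthis : (-1:ℝ)^(j-k) * (-1:ℝ)^k = (-1:ℝ)^j := by
        rw [← pow_add, Nat.sub_add_cancel hkj]
      have hkk : (-1:ℝ)^k * (-1:ℝ)^k = 1 := by
        rw [← pow_add]; exact Even.neg_one_pow ⟨k, by omega⟩
      have hdval : d (j-k) = c k := by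
        show c (j - (j - k)) = c k
        rw [show j - (j - k) = k from by omega]
      rw [hdval]
      simp only [hc]
      linear_combination (-(BumpCM.B j k * α^k * w^(j+k)) * (-1:ℝ)^k) * hthis
        + ((BumpCM.B j k * α^k * w^(j+k)) * (-1:ℝ)^(j-k)) * hkk
    rw [Finset.sum_congr rfl hterm, hrefl]
    exact hpos
  · -- t = 1
    subst h
    have hle : ((j:ℕ) : WithTop ℕ∞) ≤ (((⊤:ℕ∞)) : WithTop ℕ∞) := by
      exact_mod_cast le_top
    have hcont := (BumpCM.f_contDiff α hα).continuous_iteratedDeriv j hle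
    have hEq : Set.EqOn
        (iteratedDeriv j (fun s : ℝ => if s < 1 then Real.exp (-α / (1 - s)) else 0))
        (fun _ => (0:ℝ)) (Set.Ioi 1) := fun s hs => BumpCM.iter_zero α j s hs
    have hcl := hEq.closure hcont continuous_const
    rw [closure_Ioi] at hcl
    rw [hcl Set.self_mem_Ici]
    simp
  · rw [BumpCM.iter_zero α j t h]
    simp
end

section
/- For j = 1, 2, …, 8, if α ≥ α_j (where α₁ = 0 and α_{j+1} = α_j + 2j, i.e. the values α_j are 0, 2, 6, 12, 20, 30, 42, 56 for j = 1, …, 8), then for every t > 0 the j-th derivative of f : ℝ → ℝ, defined by f(t) = exp(-α/(1-t)) for t < 1 and f(t) = 0 for t ≥ 1, satisfies (-1)^j f^{(j)}(t) ≥ 0. -/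
open Polynomial Real Filter Set

noncomputable def QP (α : ℝ) : ℕ → Polynomial ℝ
  | 0 => 1
  | j + 1 => X ^ 2 * (C (-α) * QP α j + derivative (QP α j))

lemma hasDerivAt_aux (α : ℝ) (q : Polynomial ℝ) {t : ℝ} (ht : t < 1) :
    HasDerivAt (fun s => Real.exp (-α / (1 - s)) * q.eval ((1 - s)⁻¹))
      (Real.exp (-α / (1 - t)) *
        (X ^ 2 * (C (-α) * q + derivative q)).eval ((1 - t)⁻¹)) t := by
  have h1t : (1 : ℝ) - t ≠ 0 := by intro h; linarith
  have hbase : HasDerivAt (fun s : ℝ => 1 - s) (-1) t := by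
    simpa using (hasDerivAt_id t).const_sub 1
  have hu : HasDerivAt (fun s : ℝ => (1 - s)⁻¹) (((1 - t) ^ 2)⁻¹) t := by
    have := hbase.inv h1t
    refine this.congr_deriv ?_; simp
  have he : HasDerivAt (fun s : ℝ => Real.exp (-α / (1 - s)))
      (Real.exp (-α / (1 - t)) * (-α * ((1 - t) ^ 2)⁻¹)) t := by
    have h2 : HasDerivAt (fun s : ℝ => -α * (1 - s)⁻¹) (-α * ((1 - t) ^ 2)⁻¹) t :=
      hu.const_mul (-α)
    have h3 := h2.exp
    simp only [div_eq_mul_inv]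
    simpa [mul_comm] using h3
  have hq : HasDerivAt (fun s : ℝ => q.eval ((1 - s)⁻¹))
      (q.derivative.eval ((1 - t)⁻¹) * ((1 - t) ^ 2)⁻¹) t :=
    by have := (q.hasDerivAt ((1 - t)⁻¹)).comp t hu; exact this
  have := he.mul hq
  refine this.congr_deriv ?_
  simp only [eval_mul, eval_add, eval_pow, eval_X, eval_C, ← inv_pow]
  ring

lemma formula (α : ℝ) (j : ℕ) : ∀ t : ℝ, t < 1 →
    iteratedDeriv j (fun s : ℝ => if s < 1 then Real.exp (-α / (1 - s)) else 0) t =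
      Real.exp (-α / (1 - t)) * (QP α j).eval ((1 - t)⁻¹) := by
  induction j with
  | zero => intro t ht; simp [QP, ht]
  | succ j ih =>
    intro t ht
    rw [iteratedDeriv_succ]
    have hev : iteratedDeriv j (fun s : ℝ => if s < 1 then Real.exp (-α / (1 - s)) else 0)
        =ᶠ[nhds t] fun s => Real.exp (-α / (1 - s)) * (QP α j).eval ((1 - s)⁻¹) := by
      filter_upwards [Iio_mem_nhds ht] with s hs using ih s hs
    rw [hev.deriv_eq, (hasDerivAt_aux α (QP α j) ht).deriv]
    rfl

lemma vanish_gt (α : ℝ) (j : ℕ) : ∀ t : ℝ, 1 < t →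
    iteratedDeriv j (fun s : ℝ => if s < 1 then Real.exp (-α / (1 - s)) else 0) t = 0 := by
  induction j with
  | zero => intro t ht; simp [not_lt.2 ht.le]
  | succ j ih =>
    intro t ht
    rw [iteratedDeriv_succ]
    have hev : iteratedDeriv j (fun s : ℝ => if s < 1 then Real.exp (-α / (1 - s)) else 0)
        =ᶠ[nhds t] fun _ => (0 : ℝ) := by
      filter_upwards [Ioi_mem_nhds ht] with s hs using ih s hs
    rw [hev.deriv_eq]
    simp

lemma f_eq_glue (α : ℝ) (hα : 0 < α) :
    (fun s : ℝ => if s < 1 then Real.exp (-α / (1 - s)) else 0) =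
      fun s : ℝ => expNegInvGlue ((1 - s) / α) := by
  funext s
  by_cases hs : s < 1
  · have h2 : (0:ℝ) < 1 - s := by linarith
    have h1 : ¬ (1 - s) / α ≤ 0 := by
      push_neg
      exact div_pos h2 hα
    rw [expNegInvGlue, if_neg h1, if_pos hs, inv_div, neg_div]
  · have h1 : (1 - s) / α ≤ 0 := by
      apply div_nonpos_of_nonpos_of_nonneg <;> [linarith; linarith]
    rw [expNegInvGlue, if_pos h1, if_neg hs]

lemma vanish_one (α : ℝ) (hα : 0 < α) (j : ℕ) :
    iteratedDeriv j (fun s : ℝ => if s < 1 then Real.exp (-α / (1 - s)) else 0) 1 = 0 := by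
  set f := fun s : ℝ => if s < 1 then Real.exp (-α / (1 - s)) else 0 with hf
  have hcd : ContDiff ℝ (⊤ : ℕ∞) f := by
    rw [hf, f_eq_glue α hα]
    exact expNegInvGlue.contDiff.comp ((contDiff_const.sub contDiff_id).div_const α)
  have hcont : Continuous (iteratedDeriv j f) :=
    hcd.continuous_iteratedDeriv j (by exact_mod_cast le_top)
  have heq : Set.EqOn (iteratedDeriv j f) (fun _ => (0:ℝ)) (closure (Set.Ioi (1:ℝ))) :=
    Set.EqOn.closure (fun x hx => vanish_gt α j x hx) hcont continuous_const
  have h1 : (1:ℝ) ∈ closure (Set.Ioi (1:ℝ)) := by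
    rw [closure_Ioi]; exact Set.self_mem_Ici
  exact heq h1

lemma QPeq1 (α : ℝ) : QP α 1 = C ((-1) * α ^ 1) * X ^ 2 := by
  rw [show (1:ℕ) = 0 + 1 from rfl, QP, QP]
  apply Polynomial.funext
  intro x
  simp only [derivative_one, derivative_add, derivative_mul, derivative_C, derivative_X_pow,
    eval_add, eval_mul, eval_pow, eval_X, eval_C, eval_one, eval_zero, eval_natCast,
    zero_mul, mul_zero, add_zero, zero_add]
  push_cast
  ring

lemma QPeq2 (α : ℝ) : QP α 2 = C ((1) * α ^ 2) * X ^ 4 + C ((-2) * α ^ 1) * X ^ 3 := by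
  rw [show (2:ℕ) = 1 + 1 from rfl, QP, QPeq1 α]
  apply Polynomial.funext
  intro x
  simp only [derivative_one, derivative_add, derivative_mul, derivative_C, derivative_X_pow,
    eval_add, eval_mul, eval_pow, eval_X, eval_C, eval_one, eval_zero, eval_natCast,
    zero_mul, mul_zero, add_zero, zero_add]
  push_cast
  ring

lemma QPeq3 (α : ℝ) : QP α 3 = C ((-1) * α ^ 3) * X ^ 6 + C ((6) * α ^ 2) * X ^ 5 + C ((-6) * α ^ 1) * X ^ 4 := by
  rw [show (3:ℕ) = 2 + 1 from rfl, QP, QPeq2 α]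
  apply Polynomial.funext
  intro x
  simp only [derivative_one, derivative_add, derivative_mul, derivative_C, derivative_X_pow,
    eval_add, eval_mul, eval_pow, eval_X, eval_C, eval_one, eval_zero, eval_natCast,
    zero_mul, mul_zero, add_zero, zero_add]
  push_cast
  ring

lemma QPeq4 (α : ℝ) : QP α 4 = C ((1) * α ^ 4) * X ^ 8 + C ((-12) * α ^ 3) * X ^ 7 + C ((36) * α ^ 2) * X ^ 6 + C ((-24) * α ^ 1) * X ^ 5 := by
  rw [show (4:ℕ) = 3 + 1 from rfl, QP, QPeq3 α]
  apply Polynomial.funext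
  intro x
  simp only [derivative_one, derivative_add, derivative_mul, derivative_C, derivative_X_pow,
    eval_add, eval_mul, eval_pow, eval_X, eval_C, eval_one, eval_zero, eval_natCast,
    zero_mul, mul_zero, add_zero, zero_add]
  push_cast
  ring

lemma QPeq5 (α : ℝ) : QP α 5 = C ((-1) * α ^ 5) * X ^ 10 + C ((20) * α ^ 4) * X ^ 9 + C ((-120) * α ^ 3) * X ^ 8 + C ((240) * α ^ 2) * X ^ 7 + C ((-120) * α ^ 1) * X ^ 6 := by
  rw [show (5:ℕ) = 4 + 1 from rfl, QP, QPeq4 α]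
  apply Polynomial.funext
  intro x
  simp only [derivative_one, derivative_add, derivative_mul, derivative_C, derivative_X_pow,
    eval_add, eval_mul, eval_pow, eval_X, eval_C, eval_one, eval_zero, eval_natCast,
    zero_mul, mul_zero, add_zero, zero_add]
  push_cast
  ring

lemma QPeq6 (α : ℝ) : QP α 6 = C ((1) * α ^ 6) * X ^ 12 + C ((-30) * α ^ 5) * X ^ 11 + C ((300) * α ^ 4) * X ^ 10 + C ((-1200) * α ^ 3) * X ^ 9 + C ((1800) * α ^ 2) * X ^ 8 + C ((-720) * α ^ 1) * X ^ 7 := by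
  rw [show (6:ℕ) = 5 + 1 from rfl, QP, QPeq5 α]
  apply Polynomial.funext
  intro x
  simp only [derivative_one, derivative_add, derivative_mul, derivative_C, derivative_X_pow,
    eval_add, eval_mul, eval_pow, eval_X, eval_C, eval_one, eval_zero, eval_natCast,
    zero_mul, mul_zero, add_zero, zero_add]
  push_cast
  ring

lemma QPeq7 (α : ℝ) : QP α 7 = C ((-1) * α ^ 7) * X ^ 14 + C ((42) * α ^ 6) * X ^ 13 + C ((-630) * α ^ 5) * X ^ 12 + C ((4200) * α ^ 4) * X ^ 11 + C ((-12600) * α ^ 3) * X ^ 10 + C ((15120) * α ^ 2) * X ^ 9 + C ((-5040) * α ^ 1) * X ^ 8 := by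
  rw [show (7:ℕ) = 6 + 1 from rfl, QP, QPeq6 α]
  apply Polynomial.funext
  intro x
  simp only [derivative_one, derivative_add, derivative_mul, derivative_C, derivative_X_pow,
    eval_add, eval_mul, eval_pow, eval_X, eval_C, eval_one, eval_zero, eval_natCast,
    zero_mul, mul_zero, add_zero, zero_add]
  push_cast
  ring

lemma QPeq8 (α : ℝ) : QP α 8 = C ((1) * α ^ 8) * X ^ 16 + C ((-56) * α ^ 7) * X ^ 15 + C ((1176) * α ^ 6) * X ^ 14 + C ((-11760) * α ^ 5) * X ^ 13 + C ((58800) * α ^ 4) * X ^ 12 + C ((-141120) * α ^ 3) * X ^ 11 + C ((141120) * α ^ 2) * X ^ 10 + C ((-40320) * α ^ 1) * X ^ 9 := by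
  rw [show (8:ℕ) = 7 + 1 from rfl, QP, QPeq7 α]
  apply Polynomial.funext
  intro x
  simp only [derivative_one, derivative_add, derivative_mul, derivative_C, derivative_X_pow,
    eval_add, eval_mul, eval_pow, eval_X, eval_C, eval_one, eval_zero, eval_natCast,
    zero_mul, mul_zero, add_zero, zero_add]
  push_cast
  ring

/-- For `j = 1, …, 8`, if `α ≥ α_j`, then for
`f(t) = exp(-α/(1-t))` for `t < 1`, `f(t) = 0` for `t ≥ 1`,
we have `(-1)^j f⁽ʲ⁾(t) ≥ 0` for every `t > 0`. -/
theorem bump_completely_monotone_up_to_eight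
    (j : ℕ) (hj1 : 1 ≤ j) (hj8 : j ≤ 8) (α : ℝ) (hα : 0 < α)
    (hαj : (alphaSeq j : ℝ) ≤ α) :
    ∀ t : ℝ, 0 < t →
      0 ≤ (-1 : ℝ) ^ j *
        iteratedDeriv j (fun s : ℝ => if s < 1 then Real.exp (-α / (1 - s)) else 0) t := by
  intro t ht
  rcases lt_trichotomy t 1 with h1 | h1 | h1
  · rw [formula α j t h1]
    have h1t : (0:ℝ) < 1 - t := by linarith
    set u := (1 - t)⁻¹ with hu
    have hu0 : 0 < u := by positivity
    have hu1 : 1 ≤ u := by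
      rw [hu]
      rw [le_inv_comm₀ one_pos h1t]
      linarith
    have hau : α ≤ α * u := by nlinarith
    have hE : 0 ≤ (-1 : ℝ) ^ j * (QP α j).eval u := by
      interval_cases j
      · -- j = 1
        have e1 : (-1:ℝ)^1 * (QP α 1).eval u = α * u^2 := by
          rw [QPeq1 α]
          simp only [eval_add, eval_mul, eval_pow, eval_X, eval_C]
          ring
        rw [e1]
        have p1 : 0 ≤ α * u^2 := by positivity
        linarith [p1]
      · -- j = 2
        have hαn : (2:ℝ) ≤ α := by simpa [alphaSeq] using hαj
        have e1 : (-1:ℝ)^2 * (QP α 2).eval u = α*u^3*(α*u - 2) := by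
          rw [QPeq2 α]
          simp only [eval_add, eval_mul, eval_pow, eval_X, eval_C]
          ring
        rw [e1]
        have p1 : 0 ≤ α*u^3*(α*u - 2) := mul_nonneg (by positivity) (by linarith)
        linarith [p1]
      · -- j = 3
        have hαn : (6:ℝ) ≤ α := by simpa [alphaSeq] using hαj
        have e1 : (-1:ℝ)^3 * (QP α 3).eval u = α^2*u^5*(α*u - 6) + 6*α*u^4 := by
          rw [QPeq3 α]
          simp only [eval_add, eval_mul, eval_pow, eval_X, eval_C]
          ring
        rw [e1]
        have p1 : 0 ≤ α^2*u^5*(α*u - 6) := mul_nonneg (by positivity) (by linarith)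
        have p2 : 0 ≤ 6*α*u^4 := by positivity
        linarith [p1, p2]
      · -- j = 4
        have hαn : (12:ℝ) ≤ α := by simpa [alphaSeq] using hαj
        have e1 : (-1:ℝ)^4 * (QP α 4).eval u = α^3*u^7*(α*u - 12) + α*u^5*(36*(α*u) - 24) := by
          rw [QPeq4 α]
          simp only [eval_add, eval_mul, eval_pow, eval_X, eval_C]
          ring
        rw [e1]
        have p1 : 0 ≤ α^3*u^7*(α*u - 12) := mul_nonneg (by positivity) (by linarith)
        have p2 : 0 ≤ α*u^5*(36*(α*u) - 24) := mul_nonneg (by positivity) (by linarith)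
        linarith [p1, p2]
      · -- j = 5
        have hαn : (20:ℝ) ≤ α := by simpa [alphaSeq] using hαj
        have e1 : (-1:ℝ)^5 * (QP α 5).eval u = α^4*u^9*(α*u - 20) + α^2*u^7*(120*(α*u) - 240) + 120*α*u^6 := by
          rw [QPeq5 α]
          simp only [eval_add, eval_mul, eval_pow, eval_X, eval_C]
          ring
        rw [e1]
        have p1 : 0 ≤ α^4*u^9*(α*u - 20) := mul_nonneg (by positivity) (by linarith)
        have p2 : 0 ≤ α^2*u^7*(120*(α*u) - 240) := mul_nonneg (by positivity) (by linarith)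
        have p3 : 0 ≤ 120*α*u^6 := by positivity
        linarith [p1, p2, p3]
      · -- j = 6
        have hαn : (30:ℝ) ≤ α := by simpa [alphaSeq] using hαj
        have e1 : (-1:ℝ)^6 * (QP α 6).eval u = α^5*u^11*(α*u - 30) + α^3*u^9*(300*(α*u) - 1200) + α*u^7*(1800*(α*u) - 720) := by
          rw [QPeq6 α]
          simp only [eval_add, eval_mul, eval_pow, eval_X, eval_C]
          ring
        rw [e1]
        have p1 : 0 ≤ α^5*u^11*(α*u - 30) := mul_nonneg (by positivity) (by linarith)
        have p2 : 0 ≤ α^3*u^9*(300*(α*u) - 1200) := mul_nonneg (by positivity) (by linarith)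
        have p3 : 0 ≤ α*u^7*(1800*(α*u) - 720) := mul_nonneg (by positivity) (by linarith)
        linarith [p1, p2, p3]
      · -- j = 7
        have hαn : (42:ℝ) ≤ α := by simpa [alphaSeq] using hαj
        have e1 : (-1:ℝ)^7 * (QP α 7).eval u = α^6*u^13*(α*u - 42) + α^4*u^11*(630*(α*u) - 4200) + α^2*u^9*(12600*(α*u) - 15120) + 5040*α*u^8 := by
          rw [QPeq7 α]
          simp only [eval_add, eval_mul, eval_pow, eval_X, eval_C]
          ring
        rw [e1]
        have p1 : 0 ≤ α^6*u^13*(α*u - 42) := mul_nonneg (by positivity) (by linarith)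
        have p2 : 0 ≤ α^4*u^11*(630*(α*u) - 4200) := mul_nonneg (by positivity) (by linarith)
        have p3 : 0 ≤ α^2*u^9*(12600*(α*u) - 15120) := mul_nonneg (by positivity) (by linarith)
        have p4 : 0 ≤ 5040*α*u^8 := by positivity
        linarith [p1, p2, p3, p4]
      · -- j = 8
        have hαn : (56:ℝ) ≤ α := by simpa [alphaSeq] using hαj
        have e1 : (-1:ℝ)^8 * (QP α 8).eval u = α^7*u^15*(α*u - 56) + α^5*u^13*(1176*(α*u) - 11760) + α^3*u^11*(58800*(α*u) - 141120) + α*u^9*(141120*(α*u) - 40320) := by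
          rw [QPeq8 α]
          simp only [eval_add, eval_mul, eval_pow, eval_X, eval_C]
          ring
        rw [e1]
        have p1 : 0 ≤ α^7*u^15*(α*u - 56) := mul_nonneg (by positivity) (by linarith)
        have p2 : 0 ≤ α^5*u^13*(1176*(α*u) - 11760) := mul_nonneg (by positivity) (by linarith)
        have p3 : 0 ≤ α^3*u^11*(58800*(α*u) - 141120) := mul_nonneg (by positivity) (by linarith)
        have p4 : 0 ≤ α*u^9*(141120*(α*u) - 40320) := mul_nonneg (by positivity) (by linarith)
        linarith [p1, p2, p3, p4]
    calc (0:ℝ) ≤ Real.exp (-α / (1 - t)) * ((-1 : ℝ) ^ j * (QP α j).eval u) :=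
          mul_nonneg (Real.exp_pos _).le hE
      _ = (-1 : ℝ) ^ j * (Real.exp (-α / (1 - t)) * (QP α j).eval u) := by ring
  · rw [h1, vanish_one α hα j, mul_zero]
  · rw [vanish_gt α j t h1, mul_zero]
end
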